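/- For every positive integer k, the graph G_k defined as the bipartite graph with parts A = {1,...,2^k} and B consisting of one vertex v_I for each nonempty subinterval I of A (with v_I adjacent exactly to the integers in I) satisfies: every proper odd coloring of G_k uses at least k+2 colors. -/

import Mathlib

/-- The number of neighbors of `v` colored `t`. -/
noncomputable def nbrColorCount {V : Type*} {α : Type*} (G : SimpleGraph V) (c : V → α) (v : V) (t : α) : ℕ :=
  Nat.card {x // G.Adj v x ∧ c x = t}

/-- The set of witnesses of `v`: colors appearing an odd number of times among neighbors of `v`. -/
def witnessSet {V : Type*} {α : Type*} (G : SimpleGraph V) (c : V → α) (v : V) : Set α :=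
  {t | Odd (nbrColorCount G c v t)}

/-- A proper coloring. -/
def properColoring {V : Type*} {α : Type*} (G : SimpleGraph V) (c : V → α) : Prop :=
  ∀ ⦃u v⦄, G.Adj u v → c u ≠ c v

/-- An odd coloring. -/
def oddColoring {V : Type*} {α : Type*} (G : SimpleGraph V) (c : V → α) : Prop :=
  ∀ v, (∃ x, G.Adj v x) → ∃ t, Odd (nbrColorCount G c v t)

/-- The bipartite graph `G_k`: one side is `{1,…,2^k}` (modeled by `Fin (2^k)`), the
other side has a vertex for each nonempty interval `[a,b]`, adjacent exactly
to the elements of that interval. -/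
def intervalGraph (k : ℕ) :
    SimpleGraph (Fin (2^k) ⊕ {p : Fin (2^k) × Fin (2^k) // p.1 ≤ p.2}) :=
  SimpleGraph.fromRel (fun u w =>
    ∃ (x : Fin (2^k)) (p : {p : Fin (2^k) × Fin (2^k) // p.1 ≤ p.2}),
      u = Sum.inl x ∧ w = Sum.inr p ∧ p.1.1 ≤ x ∧ x ≤ p.1.2)

abbrev BB (k : ℕ) := {p : Fin (2^k) × Fin (2^k) // p.1 ≤ p.2}

lemma adj_inr_inl (k : ℕ) (p : BB k) (x : Fin (2^k)) :
    (intervalGraph k).Adj (Sum.inr p) (Sum.inl x) ↔ p.1.1 ≤ x ∧ x ≤ p.1.2 := by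
  simp only [intervalGraph, SimpleGraph.fromRel_adj, ne_eq, reduceCtorEq, not_false_iff, true_and]
  constructor
  · rintro (⟨y, q, h, _⟩ | ⟨y, q, hy, hq, h1, h2⟩)
    · exact absurd h (by simp)
    · obtain rfl : x = y := by simpa using hy
      obtain rfl : q = p := by simpa using hq.symm
      exact ⟨h1, h2⟩
  · rintro ⟨h1, h2⟩
    exact Or.inr ⟨x, p, rfl, rfl, h1, h2⟩

lemma adj_inr_inr (k : ℕ) (p q : BB k) :
    ¬ (intervalGraph k).Adj (Sum.inr p) (Sum.inr q) := by
  simp [intervalGraph, SimpleGraph.fromRel_adj]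

lemma count_eq {k N : ℕ} (c : Fin (2^k) ⊕ BB k → Fin N) (p : BB k) (t : Fin N) :
    nbrColorCount (intervalGraph k) c (Sum.inr p) t
      = (Finset.univ.filter (fun x : Fin (2^k) =>
          p.1.1 ≤ x ∧ x ≤ p.1.2 ∧ c (Sum.inl x) = t)).card := by
  have hbij : Function.Bijective
      (fun y : {x : Fin (2^k) // p.1.1 ≤ x ∧ x ≤ p.1.2 ∧ c (Sum.inl x) = t} =>
        (⟨Sum.inl y.1, (adj_inr_inl k p y.1).mpr ⟨y.2.1, y.2.2.1⟩, y.2.2.2⟩ :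
          {v // (intervalGraph k).Adj (Sum.inr p) v ∧ c v = t})) := by
    constructor
    · intro a b hab
      apply Subtype.ext
      simpa [Subtype.ext_iff] using hab
    · rintro ⟨v, hv, hc'⟩
      cases v with
      | inl x => exact ⟨⟨x, ((adj_inr_inl k p x).mp hv).1, ((adj_inr_inl k p x).mp hv).2, hc'⟩, rfl⟩
      | inr q => exact absurd hv (adj_inr_inr k p q)
  rw [nbrColorCount, ← Nat.card_eq_of_bijective _ hbij, Nat.card_eq_fintype_card,
    Fintype.card_subtype]

def cnt {k N : ℕ} (c : Fin (2^k) ⊕ BB k → Fin N) (i : ℕ) (t : Fin N) : ℕ :=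
  (Finset.univ.filter (fun x : Fin (2^k) => x.val < i ∧ c (Sum.inl x) = t)).card

lemma cnt_split {k N : ℕ} (c : Fin (2^k) ⊕ BB k → Fin N) (p : BB k) (t : Fin N) :
    cnt c p.1.1.val t + nbrColorCount (intervalGraph k) c (Sum.inr p) t
      = cnt c (p.1.2.val + 1) t := by
  rw [count_eq, cnt, cnt, ← Finset.card_union_of_disjoint (by
    simp only [Finset.disjoint_filter]
    intro x _ hx hy
    have := Fin.le_def.mp hy.1
    omega)]
  congr 1
  ext x
  simp only [Finset.mem_union, Finset.mem_filter, Finset.mem_univ, true_and, Fin.le_def]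
  constructor
  · rintro (⟨h1, h2⟩ | ⟨h1, h2, h3⟩)
    · exact ⟨by omega, h2⟩
    · exact ⟨by omega, h3⟩
  · rintro ⟨h1, h2⟩
    by_cases hx : x.val < p.1.1.val
    · exact Or.inl ⟨hx, h2⟩
    · exact Or.inr ⟨by omega, by omega, h2⟩

theorem stmt_13 (k : ℕ) (hk : 1 ≤ k) (N : ℕ)
    (c : Fin (2^k) ⊕ {p : Fin (2^k) × Fin (2^k) // p.1 ≤ p.2} → Fin N)
    (hc : properColoring (intervalGraph k) c)
    (hodd : oddColoring (intervalGraph k) c) :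
    k + 2 ≤ N := by
  classical
  set S : Finset (Fin N) := Finset.image (fun x : Fin (2^k) => c (Sum.inl x)) Finset.univ with hS
  -- key: for i < j ≤ 2^k, some color in S has different prefix-count parity at i and j
  have key : ∀ i j : ℕ, i < j → j ≤ 2^k →
      ∃ t ∈ S, cnt c i t % 2 ≠ cnt c j t % 2 := by
    intro i j hij hj
    have hiM : i < 2^k := by omega
    have hjM : j - 1 < 2^k := by omega
    have hp : (⟨i, hiM⟩ : Fin (2^k)) ≤ (⟨j-1, hjM⟩ : Fin (2^k)) := by
      simp only [Fin.mk_le_mk]; omega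
    set p : BB k := ⟨(⟨i, hiM⟩, ⟨j-1, hjM⟩), hp⟩ with hpdef
    have hadj : (intervalGraph k).Adj (Sum.inr p) (Sum.inl ⟨i, hiM⟩) :=
      (adj_inr_inl k p _).mpr ⟨le_refl _, hp⟩
    obtain ⟨t, hto⟩ := hodd (Sum.inr p) ⟨_, hadj⟩
    have hsplit := cnt_split c p t
    have h1 : p.1.1.val = i := rfl
    have h2 : p.1.2.val + 1 = j := by
      show (j - 1) + 1 = j
      omega
    rw [h1, h2] at hsplit
    have htS : t ∈ S := by
      have hne : nbrColorCount (intervalGraph k) c (Sum.inr p) t ≠ 0 := by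
        intro h0
        rw [h0] at hto
        simp at hto
      rw [count_eq] at hne
      obtain ⟨x, hx⟩ := Finset.card_ne_zero.mp hne
      simp only [Finset.mem_filter] at hx
      exact Finset.mem_image.mpr ⟨x, Finset.mem_univ x, hx.2.2.2⟩
    refine ⟨t, htS, ?_⟩
    have hodd2 := Nat.odd_iff.mp hto
    omega
  -- injection into functions S → Bool
  set Φ : Fin (2^k + 1) → (↥S → Bool) :=
    fun i s => decide (cnt c i.val s.val % 2 = 1) with hΦdef
  have hΦ : Function.Injective Φ := by
    intro i j hij
    by_contra hne
    have hne' : i.val ≠ j.val := fun h => hne (Fin.ext h)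
    rcases Nat.lt_or_ge i.val j.val with h | h
    · obtain ⟨t, htS, hpar⟩ := key i.val j.val h (by omega)
      have := congrFun hij ⟨t, htS⟩
      simp only [hΦdef, decide_eq_decide] at this
      omega
    · have h' : j.val < i.val := by omega
      obtain ⟨t, htS, hpar⟩ := key j.val i.val h' (by omega)
      have := congrFun hij ⟨t, htS⟩
      simp only [hΦdef, decide_eq_decide] at this
      omega
  have hcard : 2^k + 1 ≤ 2 ^ S.card := by
    have := Fintype.card_le_of_injective Φ hΦ
    simpa [Fintype.card_fun] using this
  have hScard : k + 1 ≤ S.card := by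
    have : 2^k < 2^S.card := by omega
    exact (Nat.pow_lt_pow_iff_right (by norm_num)).mp this
  -- the full-interval vertex has a color outside S
  have hM : 0 < 2^k := by positivity
  have hfull : (⟨0, hM⟩ : Fin (2^k)) ≤ (⟨2^k - 1, by omega⟩ : Fin (2^k)) := by
    simp only [Fin.mk_le_mk]; omega
  set pf : BB k := ⟨(⟨0, hM⟩, ⟨2^k - 1, by omega⟩), hfull⟩
  have ht0 : c (Sum.inr pf) ∉ S := by
    intro hmem
    obtain ⟨x, _, hx⟩ := Finset.mem_image.mp hmem
    have hadj : (intervalGraph k).Adj (Sum.inr pf) (Sum.inl x) := by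
      refine (adj_inr_inl k pf x).mpr ⟨?_, ?_⟩
      · show (0 : ℕ) ≤ x.val
        omega
      · show x.val ≤ 2^k - 1
        omega
    exact hc hadj hx.symm
  have : (insert (c (Sum.inr pf)) S).card ≤ N := by
    simpa using Finset.card_le_univ (insert (c (Sum.inr pf)) S)
  rw [Finset.card_insert_of_notMem ht0] at this
  omega
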